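/- For all ordinals α and β, if α ⊑ β then α ≤ β. -/

import Mathlib

/-- `ε₀`, the least ordinal `α` with `ω ^ α = α`. -/
noncomputable def eps0 : Ordinal.{0} := sInf {a : Ordinal | Ordinal.omega0 ^ a = a}

/-- `γ + δ` is a Cantor sum if the base-`ω` Cantor normal form of `γ + δ` is the
concatenation of the Cantor normal form of `γ` followed by that of `δ`. -/
def IsCantorSum (γ δ : Ordinal) : Prop :=
  Ordinal.CNF Ordinal.omega0 (γ + δ) =
    Ordinal.CNF Ordinal.omega0 γ ++ Ordinal.CNF Ordinal.omega0 δ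

/-- The least binary relation `⊑` on ordinals closed under the six clauses. -/
inductive Sqsub : Ordinal → Ordinal → Prop
  | refl (α : Ordinal) : Sqsub α α
  | trans {α β γ : Ordinal} : Sqsub α β → Sqsub β γ → Sqsub α γ
  | succ (α : Ordinal) : Sqsub α (α + 1)
  | mul_opow (α : Ordinal) (k : ℕ) :
      Sqsub (Ordinal.omega0 ^ α * k) (Ordinal.omega0 ^ (α + 1))
  | add {α β : Ordinal} (γ : Ordinal) : Sqsub α β →
      IsCantorSum γ α → IsCantorSum γ β → Sqsub (γ + α) (γ + β)
  | opow {α β : Ordinal} : Sqsub α β →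
      Sqsub (Ordinal.omega0 ^ α) (Ordinal.omega0 ^ β)

/-- If `α ⊑ β` then `α ≤ β`. -/
theorem le_of_sqsub (α β : Ordinal) (h : Sqsub α β) : α ≤ β := by
  induction h with
  | refl => exact le_rfl
  | trans _ _ h1 h2 => exact h1.trans h2
  | succ α => exact le_of_lt (lt_add_one α)
  | mul_opow α k =>
      calc Ordinal.omega0 ^ α * k ≤ Ordinal.omega0 ^ α * Ordinal.omega0 := by
            exact mul_le_mul_right (Ordinal.nat_lt_omega0 k).le _
        _ = Ordinal.omega0 ^ (α + 1) := (Ordinal.opow_succ _ _).symm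
  | add γ _ _ _ h1 => exact add_le_add_right h1 γ
  | opow _ h1 => exact Ordinal.opow_le_opow_right Ordinal.omega0_pos h1
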